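/- Let f = a_0 + a_1 x + ... + a_n x^n ∈ ℤ[x] a primitive polynomial with a_0 = ± p^k d for a prime p, positive integers k and d with p ∤ d. Suppose there is a positive integer m with km+1 ≤ n such that v_p(a_{(k-t)m+s}) = t for every s = 1, ..., m and t = 1, ..., k, and p ∤ a_{km+1}. If either km+1 = n, or every complex zero θ of f satisfies |θ| > d, then f is irreducible in ℤ[x]. -/

import Mathlib

open Polynomial


-- exact power helpers
lemma exactPow {p x y : ℤ} (hp : Prime p) {u v : ℕ}
    (hxu : p ^ u ∣ x) (hxu' : ¬ p ^ (u + 1) ∣ x)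
    (hyv : p ^ v ∣ y) (hyv' : ¬ p ^ (v + 1) ∣ y) :
    p ^ (u + v) ∣ x * y ∧ ¬ p ^ (u + v + 1) ∣ x * y := by
  obtain ⟨x', rfl⟩ := hxu
  obtain ⟨y', rfl⟩ := hyv
  have hpx : ¬ p ∣ x' := fun ⟨c, hc⟩ => hxu' ⟨c, by rw [hc]; ring⟩
  have hpy : ¬ p ∣ y' := fun ⟨c, hc⟩ => hyv' ⟨c, by rw [hc]; ring⟩
  constructor
  · exact ⟨x' * y', by ring⟩
  · rintro ⟨c, hc⟩
    have hpne : p ^ (u + v) ≠ 0 := pow_ne_zero _ hp.ne_zero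
    have : x' * y' = p * c := by
      apply mul_left_cancel₀ hpne
      calc p ^ (u + v) * (x' * y') = p ^ u * x' * (p ^ v * y') := by ring
        _ = p ^ (u + v + 1) * c := hc
        _ = p ^ (u + v) * (p * c) := by ring
    rcases hp.dvd_mul.mp ⟨c, this⟩ with h | h
    · exact hpx h
    · exact hpy h

lemma exact_unique {p x : ℤ} {u v : ℕ} (h1 : p ^ u ∣ x) (h2 : ¬ p ^ (u + 1) ∣ x)
    (h3 : p ^ v ∣ x) (h4 : ¬ p ^ (v + 1) ∣ x) : u = v := by
  rcases lt_trichotomy u v with h | h | h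
  · exact absurd (dvd_trans (pow_dvd_pow p h) h3) h2
  · exact h
  · exact absurd (dvd_trans (pow_dvd_pow p h) h1) h4

lemma padic_exact {p : ℕ} (hp : p.Prime) {x : ℤ} (hx : x ≠ 0) :
    (p : ℤ) ^ (padicValInt p x) ∣ x ∧ ¬ (p : ℤ) ^ (padicValInt p x + 1) ∣ x := by
  haveI : Fact p.Prime := ⟨hp⟩
  refine ⟨padicValInt_dvd x, fun h => ?_⟩
  rcases (padicValInt_dvd_iff _ _).mp h with h | h
  · exact hx h
  · omega

lemma arith_split (N Bq Br kx ky t : ℕ) (hN : 0 < N)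
    (ht : N * t + kx + ky ≤ Bq + Br + N) :
    ∃ tx ty, t ≤ tx + ty ∧ (tx = 0 ∨ N * tx + kx ≤ Bq + N) ∧
      (ty = 0 ∨ N * ty + ky + 1 ≤ Br + N) := by
  have key : ∀ A M : ℕ, N * (A / N) + A % N = A ∧ A % N < N :=
    fun A _ => ⟨Nat.div_add_mod A N, Nat.mod_lt A hN⟩
  rcases le_or_gt kx (Bq + N) with h1 | h1
  · obtain ⟨A, hA⟩ : ∃ A, Bq + N = kx + A := ⟨Bq + N - kx, by omega⟩
    obtain ⟨d1, m1⟩ := key A 0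
    rcases le_or_gt (ky + 1) (Br + N) with h2 | h2
    · obtain ⟨A2, hA2⟩ : ∃ A2, Br + N = ky + 1 + A2 := ⟨Br + N - (ky + 1), by omega⟩
      obtain ⟨d2, m2⟩ := key A2 0
      refine ⟨A / N, A2 / N, ?_, Or.inr (by linarith [Nat.zero_le (A % N), Nat.zero_le (A2 % N)]), Or.inr (by linarith [Nat.zero_le (A % N), Nat.zero_le (A2 % N)])⟩
      by_contra hc
      push_neg at hc
      have hc' : A / N + A2 / N + 1 ≤ t := by omega
      have hmul : N * (A / N + A2 / N + 1) ≤ N * t := Nat.mul_le_mul_left N hc'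
      rw [Nat.mul_add, Nat.mul_add, Nat.mul_one] at hmul
      linarith
    · -- ky too big: ty = 0, need t ≤ A / N
      refine ⟨A / N, 0, ?_, Or.inr (by linarith [Nat.zero_le (A % N)]), Or.inl rfl⟩
      by_contra hc
      push_neg at hc
      have hc' : A / N + 1 ≤ t := by omega
      have hmul : N * (A / N + 1) ≤ N * t := Nat.mul_le_mul_left N hc'
      rw [Nat.mul_add, Nat.mul_one] at hmul
      linarith
  · -- kx too big: tx = 0
    rcases le_or_gt (ky + 1) (Br + N) with h2 | h2
    · obtain ⟨A2, hA2⟩ : ∃ A2, Br + N = ky + 1 + A2 := ⟨Br + N - (ky + 1), by omega⟩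
      obtain ⟨d2, m2⟩ := key A2 0
      refine ⟨0, A2 / N, ?_, Or.inl rfl, Or.inr (by linarith [Nat.zero_le (A2 % N)])⟩
      by_contra hc
      push_neg at hc
      have hc' : A2 / N + 1 ≤ t := by omega
      have hmul : N * (A2 / N + 1) ≤ N * t := Nat.mul_le_mul_left N hc'
      rw [Nat.mul_add, Nat.mul_one] at hmul
      linarith
    · refine ⟨0, 0, ?_, Or.inl rfl, Or.inl rfl⟩
      -- N*t + kx + ky ≤ Bq + Br + N, kx > Bq + N, ky ≥ Br + N → N*t ≤ ... negative → t = 0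
      by_contra hc
      push_neg at hc
      have : N * 1 ≤ N * t := Nat.mul_le_mul_left N (by omega)
      rw [Nat.mul_one] at this
      linarith

section
variable {N k : ℕ} {p : ℤ} {q r : Polynomial ℤ} {Bq Br : ℕ} {Pq Pr : ℕ → Prop}

lemma term_dvd (hN : 0 < N)
    (Sq : ∀ i t, N * t + k * i + 1 ≤ Bq + N → p ^ t ∣ q.coeff i)
    (Sr : ∀ i t, N * t + k * i + 1 ≤ Br + N → p ^ t ∣ r.coeff i)
    (SqS : ∀ i, Pq i → ∀ t, N * t + k * i ≤ Bq + N → p ^ t ∣ q.coeff i)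
    (SrS : ∀ i, Pr i → ∀ t, N * t + k * i ≤ Br + N → p ^ t ∣ r.coeff i)
    (x y t : ℕ) (hxy : Pq x ∨ Pr y) (ht : N * t + k * x + k * y ≤ Bq + Br + N) :
    p ^ t ∣ q.coeff x * r.coeff y := by
  rcases hxy with hx | hy
  · obtain ⟨tx, ty, htt, htx, hty⟩ := arith_split N Bq Br (k * x) (k * y) t hN ht
    have h1 : p ^ tx ∣ q.coeff x := by
      rcases htx with h | h
      · simp [h]
      · exact SqS x hx tx h
    have h2 : p ^ ty ∣ r.coeff y := by
      rcases hty with h | h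
      · simp [h]
      · exact Sr y ty (by omega)
    calc p ^ t ∣ p ^ (tx + ty) := pow_dvd_pow p htt
      _ = p ^ tx * p ^ ty := pow_add p tx ty
      _ ∣ q.coeff x * r.coeff y := mul_dvd_mul h1 h2
  · obtain ⟨ty, tx, htt, hty, htx⟩ := arith_split N Br Bq (k * y) (k * x) t hN (by omega)
    have h1 : p ^ tx ∣ q.coeff x := by
      rcases htx with h | h
      · simp [h]
      · exact Sq x tx (by omega)
    have h2 : p ^ ty ∣ r.coeff y := by
      rcases hty with h | h
      · simp [h]
      · exact SrS y hy ty h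
    calc p ^ t ∣ p ^ (tx + ty) := pow_dvd_pow p (by omega)
      _ = p ^ tx * p ^ ty := pow_add p tx ty
      _ ∣ q.coeff x * r.coeff y := mul_dvd_mul h1 h2

lemma strict_mul (hN : 0 < N)
    (Sq : ∀ i t, N * t + k * i + 1 ≤ Bq + N → p ^ t ∣ q.coeff i)
    (Sr : ∀ i t, N * t + k * i + 1 ≤ Br + N → p ^ t ∣ r.coeff i)
    (SqS : ∀ i, Pq i → ∀ t, N * t + k * i ≤ Bq + N → p ^ t ∣ q.coeff i)
    (SrS : ∀ i, Pr i → ∀ t, N * t + k * i ≤ Br + N → p ^ t ∣ r.coeff i)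
    (i t : ℕ) (hi : ∀ x y, x + y = i → Pq x ∨ Pr y)
    (ht : N * t + k * i ≤ Bq + Br + N) :
    p ^ t ∣ (q * r).coeff i := by
  rw [coeff_mul]
  refine Finset.dvd_sum fun z hz => ?_
  rw [Finset.HasAntidiagonal.mem_antidiagonal] at hz
  have hk : k * z.1 + k * z.2 = k * i := by rw [← Nat.mul_add, hz]
  exact term_dvd hN Sq Sr SqS SrS z.1 z.2 t (hi z.1 z.2 hz) (by omega)

lemma exact_main (hp : Prime p) (hN : 0 < N) {a b vq vr : ℕ}
    (Sq : ∀ i t, N * t + k * i + 1 ≤ Bq + N → p ^ t ∣ q.coeff i)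
    (Sr : ∀ i t, N * t + k * i + 1 ≤ Br + N → p ^ t ∣ r.coeff i)
    (SqS : ∀ i, Pq i → ∀ t, N * t + k * i ≤ Bq + N → p ^ t ∣ q.coeff i)
    (SrS : ∀ i, Pr i → ∀ t, N * t + k * i ≤ Br + N → p ^ t ∣ r.coeff i)
    (hsplit : ∀ x y, x + y = a + b → ¬(x = a ∧ y = b) → Pq x ∨ Pr y)
    (hqa : p ^ vq ∣ q.coeff a) (hqa' : ¬ p ^ (vq + 1) ∣ q.coeff a)
    (hrb : p ^ vr ∣ r.coeff b) (hrb' : ¬ p ^ (vr + 1) ∣ r.coeff b)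
    (hBq : N * vq + k * a = Bq) (hBr : N * vr + k * b = Br) :
    p ^ (vq + vr) ∣ (q * r).coeff (a + b) ∧ ¬ p ^ (vq + vr + 1) ∣ (q * r).coeff (a + b) := by
  have hmem : ((a, b) : ℕ × ℕ) ∈ Finset.HasAntidiagonal.antidiagonal (a + b) := by
    simp [Finset.HasAntidiagonal.mem_antidiagonal]
  have hcoeff : (q * r).coeff (a + b) =
      q.coeff a * r.coeff b +
        ∑ z ∈ (Finset.HasAntidiagonal.antidiagonal (a + b)).erase (a, b), q.coeff z.1 * r.coeff z.2 := by
    rw [coeff_mul, ← Finset.add_sum_erase _ _ hmem]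
  have hrest : p ^ (vq + vr + 1) ∣
      ∑ z ∈ (Finset.HasAntidiagonal.antidiagonal (a + b)).erase (a, b), q.coeff z.1 * r.coeff z.2 := by
    refine Finset.dvd_sum fun z hz => ?_
    have hz1 := Finset.mem_of_mem_erase hz
    rw [Finset.HasAntidiagonal.mem_antidiagonal] at hz1
    have hzne : ¬ (z.1 = a ∧ z.2 = b) := by
      rintro ⟨h1, h2⟩
      exact (Finset.mem_erase.mp hz).1 (Prod.ext h1 h2)
    have hP := hsplit z.1 z.2 hz1 hzne
    have hkk : k * z.1 + k * z.2 = k * a + k * b := by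
      rw [← Nat.mul_add, ← Nat.mul_add, hz1]
    refine term_dvd hN Sq Sr SqS SrS z.1 z.2 (vq + vr + 1) hP ?_
    have : N * (vq + vr + 1) = N * vq + N * vr + N := by ring
    omega
  have hmainterm := exactPow hp hqa hqa' hrb hrb'
  constructor
  · rw [hcoeff]
    exact dvd_add hmainterm.1 (dvd_trans (pow_dvd_pow p (Nat.le_succ _)) hrest)
  · intro hdvd
    rw [hcoeff] at hdvd
    exact hmainterm.2 (by simpa using dvd_sub hdvd hrest)
end

lemma setup (p : ℕ) (hp : p.Prime) (N k : ℕ) (hN : 0 < N) (q : Polynomial ℤ) (hq : q ≠ 0) :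
    ∃ B amin amax : ℕ, amin ≤ amax ∧
      q.coeff amin ≠ 0 ∧ q.coeff amax ≠ 0 ∧
      N * padicValInt p (q.coeff amin) + k * amin = B ∧
      N * padicValInt p (q.coeff amax) + k * amax = B ∧
      (∀ i, q.coeff i ≠ 0 → B ≤ N * padicValInt p (q.coeff i) + k * i) ∧
      (∀ i t, N * t + k * i + 1 ≤ B + N → (p : ℤ) ^ t ∣ q.coeff i) ∧
      (∀ i, i < amin → ∀ t, N * t + k * i ≤ B + N → (p : ℤ) ^ t ∣ q.coeff i) ∧
      (∀ i, amax < i → ∀ t, N * t + k * i ≤ B + N → (p : ℤ) ^ t ∣ q.coeff i) := by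
  classical
  set ω : ℕ → ℕ := fun i => N * padicValInt p (q.coeff i) + k * i with hω
  have hsupp : q.support.Nonempty := Polynomial.nonempty_support_iff.mpr hq
  have himg : (q.support.image ω).Nonempty := hsupp.image ω
  set B := (q.support.image ω).min' himg with hB
  have hBle : ∀ i, q.coeff i ≠ 0 → B ≤ ω i := fun i hi =>
    Finset.min'_le _ _ (Finset.mem_image_of_mem ω (Polynomial.mem_support_iff.mpr hi))
  set A := q.support.filter (fun i => ω i = B) with hA
  have hAne : A.Nonempty := by
    obtain ⟨i, hi, hωi⟩ := Finset.mem_image.mp (Finset.min'_mem _ himg)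
    exact ⟨i, Finset.mem_filter.mpr ⟨hi, hωi⟩⟩
  refine ⟨B, A.min' hAne, A.max' hAne, Finset.min'_le _ _ (A.max'_mem hAne), ?_, ?_, ?_, ?_, hBle, ?_, ?_, ?_⟩
  · exact Polynomial.mem_support_iff.mp (Finset.mem_filter.mp (A.min'_mem hAne)).1
  · exact Polynomial.mem_support_iff.mp (Finset.mem_filter.mp (A.max'_mem hAne)).1
  · exact (Finset.mem_filter.mp (A.min'_mem hAne)).2
  · exact (Finset.mem_filter.mp (A.max'_mem hAne)).2
  · -- S
    intro i t hti
    rcases eq_or_ne (q.coeff i) 0 with h | h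
    · simp [h]
    · refine dvd_trans (pow_dvd_pow (p : ℤ) ?_) (padic_exact hp h).1
      have := hBle i h
      simp only [hω] at this
      by_contra hc
      push_neg at hc
      have : N * (padicValInt p (q.coeff i) + 1) ≤ N * t := Nat.mul_le_mul_left N hc
      rw [Nat.mul_add, Nat.mul_one] at this
      omega
  · -- strict below amin
    intro i hilt t hti
    rcases eq_or_ne (q.coeff i) 0 with h | h
    · simp [h]
    · refine dvd_trans (pow_dvd_pow (p : ℤ) ?_) (padic_exact hp h).1
      have h1 := hBle i h
      have h2 : ω i ≠ B := by
        intro hc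
        exact absurd (A.min'_le i (Finset.mem_filter.mpr ⟨Polynomial.mem_support_iff.mpr h, hc⟩))
          (by omega)
      simp only [hω] at h1 h2
      by_contra hc
      push_neg at hc
      have : N * (padicValInt p (q.coeff i) + 1) ≤ N * t := Nat.mul_le_mul_left N hc
      rw [Nat.mul_add, Nat.mul_one] at this
      omega
  · -- strict above amax
    intro i hilt t hti
    rcases eq_or_ne (q.coeff i) 0 with h | h
    · simp [h]
    · refine dvd_trans (pow_dvd_pow (p : ℤ) ?_) (padic_exact hp h).1
      have h1 := hBle i h
      have h2 : ω i ≠ B := by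
        intro hc
        exact absurd (A.le_max' i (Finset.mem_filter.mpr ⟨Polynomial.mem_support_iff.mpr h, hc⟩))
          (by omega)
      simp only [hω] at h1 h2
      by_contra hc
      push_neg at hc
      have : N * (padicValInt p (q.coeff i) + 1) ≤ N * t := Nat.mul_le_mul_left N hc
      rw [Nat.mul_add, Nat.mul_one] at this
      omega

lemma multiset_prod_gt {d : ℝ} (hd : 1 ≤ d) (s : Multiset ℝ) (hs : s ≠ 0)
    (h : ∀ x ∈ s, d < x) : d < s.prod := by
  induction s using Multiset.induction with
  | empty => simp at hs
  | cons a s ih =>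
    rw [Multiset.prod_cons]
    rcases eq_or_ne s 0 with rfl | hs'
    · simpa using h a (by simp)
    · have ha := h a (by simp)
      have hp := ih hs' (fun x hx => h x (by simp [hx]))
      nlinarith

lemma final_step (p : ℕ) (hp : p.Prime) (f g h : Polynomial ℤ) (n : ℕ)
    (hf : f = g * h) (hn : f.natDegree = n) (hprim : f.IsPrimitive)
    (k d m : ℕ) (hk : 1 ≤ k) (hdpos : 1 ≤ d) (hm : 1 ≤ m)
    (hpd : ¬ (p : ℤ) ∣ (d : ℤ))
    (ha0 : f.coeff 0 = (p : ℤ) ^ k * d ∨ f.coeff 0 = -((p : ℤ) ^ k * d))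
    (hkm : k * m + 1 ≤ n)
    (hmain : k * m + 1 = n ∨ ∀ θ : ℂ, Polynomial.aeval θ f = 0 → (d : ℝ) < ‖θ‖)
    (hg0 : g ≠ 0) (hh0 : h ≠ 0)
    (hdeg : k * m + 1 ≤ g.natDegree)
    (hgk : (p : ℤ) ^ k ∣ g.coeff 0) (hhp : ¬ (p : ℤ) ∣ h.coeff 0) :
    IsUnit h := by
  have hdegs : g.natDegree + h.natDegree = n := by
    rw [← hn, hf, Polynomial.natDegree_mul hg0 hh0]
  -- h.coeff 0 divides d
  have hf0 : f.coeff 0 = g.coeff 0 * h.coeff 0 := by rw [hf, Polynomial.mul_coeff_zero]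
  obtain ⟨e, he⟩ := hgk
  have hpk0 : ((p : ℤ)) ^ k ≠ 0 := pow_ne_zero _ (by exact_mod_cast hp.ne_zero)
  have hhd : h.coeff 0 ∣ (d : ℤ) := by
    rcases ha0 with ha | ha
    · refine ⟨e, mul_left_cancel₀ hpk0 ?_⟩
      rw [← ha, hf0, he]; ring
    · refine ⟨-e, mul_left_cancel₀ hpk0 ?_⟩
      have : (p:ℤ)^k * (d:ℤ) = -(g.coeff 0 * h.coeff 0) := by rw [← hf0, ha]; ring
      rw [this, he]; ring
  have hh00 : h.coeff 0 ≠ 0 := by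
    intro hc
    rw [hc] at hhp
    exact hhp (dvd_zero _)
  -- degree of h is 0
  have hdeg0 : h.natDegree = 0 := by
    rcases hmain with hmn | hroots
    · omega
    · by_contra hc
      have hc1 : 1 ≤ h.natDegree := by omega
      -- complex roots argument
      set hC := h.map (Int.castRingHom ℂ) with hhC
      have hCne : hC ≠ 0 := by
        rw [hhC]
        exact (Polynomial.map_ne_zero_iff (by exact Int.cast_injective)).mpr hh0
      have hCdeg : hC.natDegree = h.natDegree := by
        rw [hhC]; exact Polynomial.natDegree_map_eq_of_injective Int.cast_injective h
      have hsplits : Splits hC := IsAlgClosed.splits hC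
      have hcard : hC.roots.card = h.natDegree := by
        rw [← hCdeg]; exact (Polynomial.splits_iff_card_roots.mp hsplits)
      have heq := hsplits.eq_prod_roots
      -- evaluate at 0
      have hev : (h.coeff 0 : ℂ) = hC.leadingCoeff * (hC.roots.map fun a => -a).prod := by
        have h1 : (h.coeff 0 : ℂ) = hC.coeff 0 := by rw [hhC, Polynomial.coeff_map]; rfl
        rw [h1, Polynomial.coeff_zero_eq_eval_zero]
        conv_lhs => rw [heq]
        rw [Polynomial.eval_mul, Polynomial.eval_C, Polynomial.eval_multiset_prod,
          Multiset.map_map]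
        congr 1
        congr 1
        apply Multiset.map_congr rfl
        intro x _
        simp [Function.comp]
      -- every root of hC has abs > d
      have hroot : ∀ z ∈ hC.roots, (d : ℝ) < ‖z‖ := by
        intro z hz
        have hzr : hC.eval z = 0 := (Polynomial.isRoot_of_mem_roots hz)
        apply hroots
        rw [Polynomial.aeval_def, ← Polynomial.eval_map]
        have : algebraMap ℤ ℂ = Int.castRingHom ℂ := rfl
        rw [this, hf, Polynomial.map_mul, Polynomial.eval_mul, ← hhC, hzr, mul_zero]
      -- now compare absolute values
      have habs : ‖((h.coeff 0 : ℂ))‖ =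
          ‖hC.leadingCoeff‖ * (hC.roots.map fun a => ‖(-a)‖).prod := by
        rw [hev, norm_mul]
        congr 1
        show (normHom : ℂ →*₀ ℝ) _ = _
        rw [map_multiset_prod, Multiset.map_map]
        rfl
      have hlead : (1 : ℝ) ≤ ‖hC.leadingCoeff‖ := by
        have : hC.leadingCoeff = (h.leadingCoeff : ℂ) := by
          rw [hhC]
          exact Polynomial.leadingCoeff_map_of_leadingCoeff_ne_zero _ (by
            simp [Polynomial.leadingCoeff_ne_zero.mpr hh0])
        rw [this, Complex.norm_intCast]
        exact_mod_cast Int.one_le_abs (Polynomial.leadingCoeff_ne_zero.mpr hh0)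
      have hprodgt : (d : ℝ) < (hC.roots.map fun a => ‖(-a)‖).prod := by
        apply multiset_prod_gt (by exact_mod_cast hdpos)
        · rw [Ne, Multiset.map_eq_zero]
          intro hc0
          rw [hc0] at hcard
          simp at hcard
          omega
        · intro x hx
          obtain ⟨z, hz, rfl⟩ := Multiset.mem_map.mp hx
          rw [norm_neg]
          exact hroot z hz
      have hprodpos : (0 : ℝ) < (hC.roots.map fun a => ‖(-a)‖).prod := by
        have : (0:ℝ) < d := by exact_mod_cast hdpos
        linarith
      have hlt : (d : ℝ) < ‖((h.coeff 0 : ℂ))‖ := by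
        rw [habs]
        nlinarith
      have hle : |h.coeff 0| ≤ (d : ℤ) := Int.le_of_dvd (by exact_mod_cast hdpos) ((abs_dvd _ _).mpr hhd)
      rw [Complex.norm_intCast] at hlt
      have : ((|h.coeff 0| : ℤ) : ℝ) ≤ (d : ℝ) := by exact_mod_cast hle
      rw [Int.cast_abs] at this
      linarith
  -- h is a unit
  have hhc : h = Polynomial.C (h.coeff 0) := Polynomial.eq_C_of_natDegree_eq_zero hdeg0
  have hdvd : Polynomial.C (h.coeff 0) ∣ f := ⟨g, by rw [hf]; nth_rewrite 1 [hhc]; ring⟩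
  have hu := hprim _ hdvd
  rw [hhc]
  exact (Polynomial.isUnit_C).mpr hu


/-- Corollary 4 of the paper: an Eisenstein-like layered divisibility criterion. -/
theorem irreducible_cor4 (p : ℕ) (hp : p.Prime) (f : Polynomial ℤ) (n : ℕ)
    (hn : f.natDegree = n) (hprim : f.IsPrimitive)
    (k d m : ℕ) (hk : 1 ≤ k) (hdpos : 1 ≤ d) (hm : 1 ≤ m)
    (hpd : ¬ (p : ℤ) ∣ (d : ℤ))
    (ha0 : f.coeff 0 = (p : ℤ) ^ k * d ∨ f.coeff 0 = -((p : ℤ) ^ k * d))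
    (hkm : k * m + 1 ≤ n)
    (hlayers : ∀ t s, 1 ≤ t → t ≤ k → 1 ≤ s → s ≤ m →
      padicValInt p (f.coeff ((k - t) * m + s)) = t)
    (htop : ¬ (p : ℤ) ∣ f.coeff (k * m + 1))
    (hmain : k * m + 1 = n ∨ ∀ θ : ℂ, Polynomial.aeval θ f = 0 → (d : ℝ) < ‖θ‖) :
    Irreducible f := by
  have hkm1 : 1 ≤ k * m := Nat.one_le_iff_ne_zero.mpr (by positivity)
  set N := k * m + 1 with hNdef
  have hNpos : 0 < N := by omega
  have hN2 : 2 ≤ N := by omega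
  have hpZ : Prime (p : ℤ) := Nat.prime_iff_prime_int.mp hp
  have hdne : (d : ℤ) ≠ 0 := by exact_mod_cast Nat.one_le_iff_ne_zero.mp hdpos
  have hf0ne : f.coeff 0 ≠ 0 := by
    rcases ha0 with ha | ha <;> rw [ha] <;>
      simp [hdne, pow_ne_zero, hpZ.ne_zero, hp.ne_zero, Nat.one_le_iff_ne_zero.mp hdpos]
  have hf0k : (p : ℤ) ^ k ∣ f.coeff 0 := by
    rcases ha0 with ha | ha <;> rw [ha]
    · exact Dvd.intro _ rfl
    · exact (dvd_neg).mpr (Dvd.intro _ rfl)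
  have hf0k' : ¬ (p : ℤ) ^ (k + 1) ∣ f.coeff 0 := by
    have key : ¬ (p : ℤ) ^ (k + 1) ∣ (p : ℤ) ^ k * d := by
      rintro ⟨c, hc⟩
      apply hpd
      refine ⟨c, mul_left_cancel₀ (pow_ne_zero k hpZ.ne_zero) ?_⟩
      rw [hc]; ring
    rcases ha0 with ha | ha <;> rw [ha]
    · exact key
    · rw [dvd_neg]; exact key
  have hfNne : f.coeff N ≠ 0 := by
    intro hc; rw [hc] at htop; exact htop (dvd_zero _)
  -- the weight of every other coefficient is strictly larger
  have ffacts : ∀ i, f.coeff i ≠ 0 → i ≠ 0 → i ≠ N →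
      N * k + 1 ≤ N * padicValInt p (f.coeff i) + k * i := by
    intro i hi h0 hNe
    rcases le_or_gt i (k * m) with hile | hile
    · -- layered zone
      obtain ⟨qq, rr, hrm, hi1⟩ : ∃ q r, r < m ∧ m * q + r + 1 = i := by
        refine ⟨(i - 1) / m, (i - 1) % m, Nat.mod_lt _ hm, ?_⟩
        have h2 := Nat.div_add_mod (i - 1) m
        rw [h2]; omega
      have hqlt : qq < k := by
        by_contra hc
        push_neg at hc
        have := Nat.mul_le_mul_left m hc
        have hmk : m * k = k * m := Nat.mul_comm m k
        linarith
      set t := k - qq with htdef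
      have e1 : qq + t = k := by omega
      have hlay := hlayers t (rr + 1) (by omega) (by omega) (by omega) (by omega)
      have hidx : (k - t) * m + (rr + 1) = i := by
        have : k - t = qq := by omega
        rw [this, ← hi1, Nat.mul_comm]
        ring
      rw [hidx] at hlay
      rw [hlay]
      have key : N * t + k * i = N * k + t + k * rr := by
        have e1' : (qq : ℤ) + t = k := by exact_mod_cast e1
        have hi1' : ((m : ℤ)) * qq + rr + 1 = i := by exact_mod_cast hi1
        rw [hNdef]
        zify
        linear_combination ((k : ℤ) * m) * e1' - (k : ℤ) * hi1'
      rw [key]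
      have ht1 : 1 ≤ t := by omega
      linarith [Nat.zero_le (k * rr)]
    · -- i > k*m, i ≠ N so i ≥ N + 1
      have hiN : N + 1 ≤ i := by omega
      have h1 : k * (N + 1) ≤ k * i := Nat.mul_le_mul_left k hiN
      have h2 : k * N = N * k := Nat.mul_comm k N
      have h3 : k * (N + 1) = k * N + k := by ring
      linarith [Nat.zero_le (N * padicValInt p (f.coeff i))]
  constructor
  · intro hu
    have h0 := Polynomial.natDegree_eq_zero_of_isUnit hu
    omega
  · intro g h hf
    have hfne : f ≠ 0 := fun hc => hf0ne (by rw [hc]; simp)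
    have hgne : g ≠ 0 := by rintro rfl; rw [zero_mul] at hf; exact hfne hf
    have hhne : h ≠ 0 := by rintro rfl; rw [mul_zero] at hf; exact hfne hf
    have hf0 : f.coeff 0 = g.coeff 0 * h.coeff 0 := by rw [hf, Polynomial.mul_coeff_zero]
    have hg0ne : g.coeff 0 ≠ 0 := fun hc => hf0ne (by rw [hf0, hc, zero_mul])
    have hh0ne : h.coeff 0 ≠ 0 := fun hc => hf0ne (by rw [hf0, hc, mul_zero])
    obtain ⟨Bg, ag, ag', hgle, hgc, hgc', hgB, hgB', hgall, hgS, hgSmin, hgSmax⟩ :=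
      setup p hp N k hNpos g hgne
    obtain ⟨Bh, bh, bh', hhle, hhc, hhc', hhB, hhB', hhall, hhS, hhSmin, hhSmax⟩ :=
      setup p hp N k hNpos h hhne
    set αg := padicValInt p (g.coeff 0) with hαg
    set αh := padicValInt p (h.coeff 0) with hαh
    have hexg := padic_exact hp hg0ne
    have hexh := padic_exact hp hh0ne
    have hex0 := exactPow hpZ hexg.1 hexg.2 hexh.1 hexh.2
    rw [← hf0] at hex0
    have hαsum : αg + αh = k := exact_unique hex0.1 hex0.2 hf0k hf0k'
    have hBgle : Bg ≤ N * αg := by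
      have := hgall 0 hg0ne
      simpa using this
    have hBhle : Bh ≤ N * αh := by
      have := hhall 0 hh0ne
      simpa using this
    -- min attaining indices
    have hexga := padic_exact hp hgc
    have hexhb := padic_exact hp hhc
    have emin := exact_main (Pq := fun i => i < ag) (Pr := fun i => i < bh)
      hpZ hNpos hgS hhS hgSmin hhSmin
      (by intro x y hxy hne; omega)
      hexga.1 hexga.2 hexhb.1 hexhb.2 hgB hhB
    rw [← hf] at emin
    have hs0ne : f.coeff (ag + bh) ≠ 0 := fun hc => emin.2 (by rw [hc]; exact dvd_zero _)
    have hexs0 := padic_exact hp hs0ne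
    have hvs0 : padicValInt p (f.coeff (ag + bh)) =
        padicValInt p (g.coeff ag) + padicValInt p (h.coeff bh) :=
      exact_unique hexs0.1 hexs0.2 emin.1 emin.2
    have hs0 : ag + bh = 0 := by
      by_contra hs0c
      have hs0N : ag + bh = N := by
        by_contra hc
        have hF := ffacts (ag + bh) hs0ne hs0c hc
        rw [hvs0] at hF
        have e1 : N * (padicValInt p (g.coeff ag) + padicValInt p (h.coeff bh)) =
            N * padicValInt p (g.coeff ag) + N * padicValInt p (h.coeff bh) := by ring
        have e2 : k * (ag + bh) = k * ag + k * bh := by ring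
        have e3 : N * αg + N * αh = N * k := by
          rw [← Nat.left_distrib, hαsum]
        linarith [hgB, hhB]
      -- Case B : the minimum-index pair sums to N : contradiction at coefficient 0
      have hstrict := strict_mul (Pq := fun i => i < ag) (Pr := fun i => i < bh)
        hNpos hgS hhS hgSmin hhSmin 0 (k + 1)
        (by intro x y hxy; omega)
        (by
          have hVN : padicValInt p (f.coeff N) = 0 := padicValInt.eq_zero_of_not_dvd htop
          rw [← hs0N, hvs0] at hVN
          have hvg0 : padicValInt p (g.coeff ag) = 0 := by omega
          have hvh0 : padicValInt p (h.coeff bh) = 0 := by omega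
          rw [hvg0] at hgB
          rw [hvh0] at hhB
          simp only [Nat.mul_zero, Nat.zero_add] at hgB hhB
          have e2 : k * ag + k * bh = k * (ag + bh) := (Nat.left_distrib k ag bh).symm
          have e3 : k * N = N * k := Nat.mul_comm k N
          have e4 : N * (k + 1) = N * k + N := by ring
          rw [e4, Nat.mul_zero, ← hgB, ← hhB, e2, hs0N, e3]
          exact le_of_eq (by ring))
      rw [← hf] at hstrict
      exact hf0k' hstrict
    have hag0 : ag = 0 := by omega
    have hbh0 : bh = 0 := by omega
    rw [hag0] at hgB
    rw [hbh0] at hhB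
    simp only [Nat.mul_zero, Nat.add_zero] at hgB hhB
    -- so Bg = N*αg, Bh = N*αh, Bg + Bh = N*k
    have hBsum : Bg + Bh = N * k := by
      rw [← hgB, ← hhB, ← hαg, ← hαh]
      have : N * αg + N * αh = N * (αg + αh) := by ring
      rw [this, hαsum]
    -- max attaining indices
    have hexga' := padic_exact hp hgc'
    have hexhb' := padic_exact hp hhc'
    have emax := exact_main (Pq := fun i => ag' < i) (Pr := fun i => bh' < i)
      hpZ hNpos hgS hhS hgSmax hhSmax
      (by intro x y hxy hne; omega)
      hexga'.1 hexga'.2 hexhb'.1 hexhb'.2 hgB' hhB'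
    rw [← hf] at emax
    have hs1ne : f.coeff (ag' + bh') ≠ 0 := fun hc => emax.2 (by rw [hc]; exact dvd_zero _)
    have hexs1 := padic_exact hp hs1ne
    have hvs1 : padicValInt p (f.coeff (ag' + bh')) =
        padicValInt p (g.coeff ag') + padicValInt p (h.coeff bh') :=
      exact_unique hexs1.1 hexs1.2 emax.1 emax.2
    have hs1 : ag' + bh' = N := by
      by_contra hc
      have hs10 : ag' + bh' = 0 := by
        by_contra hs0c
        have hF := ffacts (ag' + bh') hs1ne hs0c hc
        rw [hvs1] at hF
        have e1 : N * (padicValInt p (g.coeff ag') + padicValInt p (h.coeff bh')) =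
            N * padicValInt p (g.coeff ag') + N * padicValInt p (h.coeff bh') := by ring
        have e2 : k * (ag' + bh') = k * ag' + k * bh' := by ring
        have e3 : N * αg + N * αh = N * k := by
          rw [← Nat.left_distrib, hαsum]
        linarith [hgB', hhB', hBgle, hBhle]
      -- both max indices are 0 : contradiction at coefficient N
      have hstrict := strict_mul (Pq := fun i => ag' < i) (Pr := fun i => bh' < i)
        hNpos hgS hhS hgSmax hhSmax N 1
        (by intro x y hxy; omega)
        (by
          have e3 : k * N = N * k := Nat.mul_comm k N
          rw [Nat.mul_one, e3, hBsum]
          omega)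
      rw [← hf, pow_one] at hstrict
      exact htop hstrict
    -- N divides both ag' and bh'
    have hBgN : N * αg = Bg := by rw [hαg]; exact hgB
    have hBhN : N * αh = Bh := by rw [hαh]; exact hhB
    have hg2 : N * padicValInt p (g.coeff ag') + k * ag' = N * αg := hgB'.trans hBgN.symm
    have hh2 : N * padicValInt p (h.coeff bh') + k * bh' = N * αh := hhB'.trans hBhN.symm
    have hvg'le : padicValInt p (g.coeff ag') ≤ αg := by
      have h1 : N * padicValInt p (g.coeff ag') ≤ N * αg := by
        linarith [Nat.zero_le (k * ag')]
      exact Nat.le_of_mul_le_mul_left h1 hNpos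
    have hvh'le : padicValInt p (h.coeff bh') ≤ αh := by
      have h1 : N * padicValInt p (h.coeff bh') ≤ N * αh := by
        linarith [Nat.zero_le (k * bh')]
      exact Nat.le_of_mul_le_mul_left h1 hNpos
    have hdvdg : N ∣ k * ag' := by
      obtain ⟨c, hc⟩ : ∃ c, padicValInt p (g.coeff ag') + c = αg :=
        ⟨αg - padicValInt p (g.coeff ag'), by omega⟩
      refine ⟨c, ?_⟩
      have h3 : N * (padicValInt p (g.coeff ag') + c) = N * αg := by rw [hc]
      rw [Nat.mul_add] at h3
      linarith
    have hdvdh : N ∣ k * bh' := by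
      obtain ⟨c, hc⟩ : ∃ c, padicValInt p (h.coeff bh') + c = αh :=
        ⟨αh - padicValInt p (h.coeff bh'), by omega⟩
      refine ⟨c, ?_⟩
      have h3 : N * (padicValInt p (h.coeff bh') + c) = N * αh := by rw [hc]
      rw [Nat.mul_add] at h3
      linarith
    have hcop : Nat.Coprime N k := by
      have : Nat.Coprime k N := by
        rw [hNdef]
        simpa [Nat.add_comm] using (Nat.coprime_one_right k).add_mul_left_right m
      exact this.symm
    have hNag : N ∣ ag' := hcop.dvd_of_dvd_mul_left hdvdg
    have hNbh : N ∣ bh' := hcop.dvd_of_dvd_mul_left hdvdh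
    have hcases : ag' = N ∨ ag' = 0 := by
      rcases lt_or_ge ag' N with hlt | hge
      · exact Or.inr (Nat.eq_zero_of_dvd_of_lt hNag hlt)
      · left; omega
    rcases hcases with hagN | hag0'
    · -- g carries the whole segment
      have hbh'0 : bh' = 0 := by omega
      have hαgk : αg = k := by
        have e5 : k * ag' = k * N := by rw [hagN]
        have : padicValInt p (g.coeff ag') + k = αg := by
          apply Nat.eq_of_mul_eq_mul_left hNpos
          rw [Nat.mul_add]
          linarith [hg2, e5, Nat.mul_comm k N]
        omega
      have hαh0 : αh = 0 := by omega
      have hdegN : N ≤ g.natDegree := by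
        rw [← hagN]
        exact Polynomial.le_natDegree_of_ne_zero hgc'
      have hgk : (p : ℤ) ^ k ∣ g.coeff 0 := by rw [← hαgk]; exact hexg.1
      have hhp' : ¬ (p : ℤ) ∣ h.coeff 0 := by
        have h5 := hexh.2
        rw [← hαh, hαh0, pow_one] at h5
        exact h5
      exact Or.inr (final_step p hp f g h n hf hn hprim k d m hk hdpos hm hpd ha0 hkm
        hmain hgne hhne hdegN hgk hhp')
    · -- h carries the whole segment
      have hbh'N : bh' = N := by omega
      have hαhk : αh = k := by
        have e5 : k * bh' = k * N := by rw [hbh'N]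
        have : padicValInt p (h.coeff bh') + k = αh := by
          apply Nat.eq_of_mul_eq_mul_left hNpos
          rw [Nat.mul_add]
          linarith [hh2, e5, Nat.mul_comm k N]
        omega
      have hαg0 : αg = 0 := by omega
      have hdegN : N ≤ h.natDegree := by
        rw [← hbh'N]
        exact Polynomial.le_natDegree_of_ne_zero hhc'
      have hhk : (p : ℤ) ^ k ∣ h.coeff 0 := by rw [← hαhk]; exact hexh.1
      have hgp' : ¬ (p : ℤ) ∣ g.coeff 0 := by
        have h5 := hexg.2
        rw [← hαg, hαg0, pow_one] at h5
        exact h5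
      exact Or.inl (final_step p hp f h g n (by rw [hf, mul_comm]) hn hprim k d m hk hdpos
        hm hpd ha0 hkm hmain hhne hgne hdegN hhk hgp')
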